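/- arXiv:1910.12572 — 4 statements merged into one kernel-verified Lean document; each statement's English description precedes it below -/
import Mathlib

section
/- Let A ∈ ℝ^{n×n} be stable (every eigenvalue has strictly negative real part). Then for every δ ∈ (−1,1) and every ω ∈ ℝ the matrix iω·I − (((1−δ)/(1+δ))·A − I) is invertible, and the Kreiss constant satisfies K(A) = sup_{δ ∈ (−1,1)} sup_{ω ∈ ℝ} ‖(iω·I − (((1−δ)/(1+δ))·A − I))⁻¹‖. -/
open Matrix

/-- Spectral norm (largest singular value): the operator norm induced by Euclidean norms. -/
noncomputable def specNorm {𝕜 : Type*} [RCLike 𝕜] {m n : Type*} [Fintype m] [Fintype n]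
    [DecidableEq n] (M : Matrix m n 𝕜) : ℝ :=
  ‖LinearMap.toContinuousLinearMap (Matrix.toEuclideanLin M)‖

/-- A real square matrix is stable (Hurwitz) if all of its complex eigenvalues
(roots of its characteristic polynomial over `ℂ`) have strictly negative real part. -/
def IsStable {n : Type*} [Fintype n] [DecidableEq n] (A : Matrix n n ℝ) : Prop :=
  ∀ z : ℂ, ((A.map (algebraMap ℝ ℂ)).charpoly).IsRoot z → z.re < 0

/-- The Kreiss constant `K(A) = sup_{Re s > 0} Re(s) ‖(sI - A)⁻¹‖`. -/
noncomputable def Kreiss {n : Type*} [Fintype n] [DecidableEq n] (A : Matrix n n ℝ) : ℝ :=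
  sSup {r : ℝ | ∃ s : ℂ, 0 < s.re ∧
    r = s.re * specNorm ((s • (1 : Matrix n n ℂ) - A.map (algebraMap ℝ ℂ))⁻¹)}

/-- Transient growth `M₀(A) = sup_{t ≥ 0} ‖exp(tA)‖`. -/
noncomputable def transientGrowth {n : Type*} [Fintype n] [DecidableEq n]
    (A : Matrix n n ℝ) : ℝ :=
  sSup {r : ℝ | ∃ t : ℝ, 0 ≤ t ∧ r = specNorm (NormedSpace.exp (t • A))}

private lemma eval_charpoly'' {N : ℕ} (M : Matrix (Fin N) (Fin N) ℂ) (s : ℂ) :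
    M.charpoly.eval s = (s • (1 : Matrix (Fin N) (Fin N) ℂ) - M).det := by
  have h := RingHom.map_det (Polynomial.evalRingHom s) (charmatrix M)
  rw [Matrix.charpoly,
    show Polynomial.eval s (charmatrix M).det = (Polynomial.evalRingHom s) (charmatrix M).det
      from rfl, h]
  congr 1
  ext i j
  by_cases hij : i = j <;>
    simp [Matrix.charmatrix_apply, hij, Matrix.one_apply, Matrix.smul_apply,
      Matrix.sub_apply, Matrix.diagonal_apply]

private lemma re_mk (a b : ℝ) : ((a : ℂ) + (b : ℂ) * Complex.I).re = a := by simp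

private lemma isUnit_res {N : ℕ} (B : Matrix (Fin N) (Fin N) ℂ)
    (hB : ∀ z : ℂ, B.charpoly.IsRoot z → z.re < 0) {s : ℂ} (hs : 0 < s.re) :
    IsUnit (s • (1 : Matrix (Fin N) (Fin N) ℂ) - B) := by
  rw [Matrix.isUnit_iff_isUnit_det, isUnit_iff_ne_zero]
  intro h
  have hroot : B.charpoly.IsRoot s := by rwa [Polynomial.IsRoot, eval_charpoly'']
  linarith [hB s hroot]

private lemma specNorm_smul {N : ℕ} (c : ℂ) (M : Matrix (Fin N) (Fin N) ℂ) :
    specNorm (c • M) = ‖c‖ * specNorm M := by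
  unfold specNorm
  rw [_root_.map_smul, _root_.map_smul]
  exact norm_smul c (LinearMap.toContinuousLinearMap (toEuclideanLin M))

private lemma key_eq {N : ℕ} (B : Matrix (Fin N) (Fin N) ℂ) (t ω : ℝ) (ht : 0 < t) :
    (Complex.I * (ω : ℂ)) • (1 : Matrix (Fin N) (Fin N) ℂ) - ((t : ℂ) • B - 1)
      = (t : ℂ) • (((((1/t : ℝ) : ℂ) + ((ω/t : ℝ) : ℂ) * Complex.I) •
          (1 : Matrix (Fin N) (Fin N) ℂ)) - B) := by
  have h : (t : ℂ) * (((1/t : ℝ) : ℂ) + ((ω/t : ℝ) : ℂ) * Complex.I)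
      = 1 + Complex.I * (ω : ℂ) := by
    have ht' : (t : ℂ) ≠ 0 := by exact_mod_cast ht.ne'
    push_cast
    field_simp
  rw [smul_sub, smul_smul, h, add_smul, one_smul]
  abel

private lemma inv_smul'' {N : ℕ} (c : ℂ) (hc : c ≠ 0) (M : Matrix (Fin N) (Fin N) ℂ)
    (hu : IsUnit M.det) : (c • M)⁻¹ = c⁻¹ • M⁻¹ :=
  Matrix.inv_eq_left_inv (by
    rw [Matrix.smul_mul, Matrix.mul_smul, smul_smul, inv_mul_cancel₀ hc, one_smul,
      Matrix.nonsing_inv_mul _ hu])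

private lemma norm_eq {N : ℕ} (B : Matrix (Fin N) (Fin N) ℂ)
    (hB : ∀ z : ℂ, B.charpoly.IsRoot z → z.re < 0) (t ω : ℝ) (ht : 0 < t) :
    specNorm (((Complex.I * (ω : ℂ)) • (1 : Matrix (Fin N) (Fin N) ℂ) -
        ((t : ℂ) • B - 1))⁻¹)
      = (1/t) * specNorm ((((((1/t : ℝ) : ℂ) + ((ω/t : ℝ) : ℂ) * Complex.I) •
          (1 : Matrix (Fin N) (Fin N) ℂ)) - B)⁻¹) := by
  have hs : (0:ℝ) < (((1/t : ℝ) : ℂ) + ((ω/t : ℝ) : ℂ) * Complex.I).re := by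
    rw [re_mk]
    positivity
  have hu : IsUnit ((((1/t : ℝ) : ℂ) + ((ω/t : ℝ) : ℂ) * Complex.I) •
      (1 : Matrix (Fin N) (Fin N) ℂ) - B).det :=
    (Matrix.isUnit_iff_isUnit_det _).mp (isUnit_res B hB hs)
  have htc : (t : ℂ) ≠ 0 := by exact_mod_cast ht.ne'
  rw [key_eq B t ω ht, inv_smul'' _ htc _ hu, specNorm_smul]
  congr 1
  rw [norm_inv, Complex.norm_real, Real.norm_eq_abs, abs_of_pos ht, one_div]

/-- For a stable `A`, every matrix `iω I - (((1-δ)/(1+δ)) A - I)` with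
`δ ∈ (-1,1)`, `ω ∈ ℝ` is invertible, and the Kreiss constant equals the supremum of the
spectral norms of their inverses. -/
theorem kreiss_eq_sup_resolvent_reparam {n : ℕ} (A : Matrix (Fin n) (Fin n) ℝ)
    (hA : IsStable A) :
    (∀ δ ∈ Set.Ioo (-1 : ℝ) 1, ∀ ω : ℝ,
      IsUnit ((Complex.I * (ω : ℂ)) • (1 : Matrix (Fin n) (Fin n) ℂ) -
        ((((1 - δ) / (1 + δ) : ℝ) : ℂ) • A.map (algebraMap ℝ ℂ) - 1))) ∧
    Kreiss A = sSup {r : ℝ | ∃ δ ∈ Set.Ioo (-1 : ℝ) 1, ∃ ω : ℝ,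
      r = specNorm (((Complex.I * (ω : ℂ)) • (1 : Matrix (Fin n) (Fin n) ℂ) -
        ((((1 - δ) / (1 + δ) : ℝ) : ℂ) • A.map (algebraMap ℝ ℂ) - 1))⁻¹)} := by
  set B := A.map (algebraMap ℝ ℂ) with hBdef
  have hB : ∀ z : ℂ, B.charpoly.IsRoot z → z.re < 0 := hA
  constructor
  · rintro δ ⟨hδ1, hδ2⟩ ω
    have ht : 0 < (1 - δ) / (1 + δ) := div_pos (by linarith) (by linarith)
    rw [key_eq B _ ω ht]
    have hs : (0:ℝ) < (((1/((1-δ)/(1+δ)) : ℝ) : ℂ) +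
        ((ω/((1-δ)/(1+δ)) : ℝ) : ℂ) * Complex.I).re := by
      rw [re_mk]
      positivity
    have hu := isUnit_res B hB hs
    have htc : (((1-δ)/(1+δ) : ℝ) : ℂ) ≠ 0 := by exact_mod_cast ht.ne'
    rw [Matrix.isUnit_iff_isUnit_det, Matrix.det_smul]
    exact ((isUnit_iff_ne_zero.mpr htc).pow _).mul ((Matrix.isUnit_iff_isUnit_det _).mp hu)
  · rw [Kreiss]
    congr 1
    ext r
    simp only [Set.mem_setOf_eq]
    constructor
    · rintro ⟨s, hs, rfl⟩
      refine ⟨(s.re - 1)/(s.re + 1), ⟨?_, ?_⟩, s.im/s.re, ?_⟩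
      · rw [lt_div_iff₀ (by linarith)]; linarith
      · rw [div_lt_one (by linarith)]; linarith
      · have hδ : (1 - (s.re - 1)/(s.re + 1)) / (1 + (s.re - 1)/(s.re + 1)) = 1/s.re := by
          rw [div_eq_div_iff]
          · field_simp
            ring
          · have : 1 + (s.re - 1)/(s.re + 1) = 2*s.re/(s.re+1) := by
              field_simp; ring
            rw [this]; positivity
          · positivity
        rw [hδ]
        have ht : (0:ℝ) < 1/s.re := by positivity
        rw [norm_eq B hB _ (s.im/s.re) ht]
        have h1 : (1:ℝ)/(1/s.re) = s.re := by field_simp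
        have h2 : (s.im/s.re)/(1/s.re) = s.im := by field_simp
        rw [h1, h2, Complex.re_add_im s]
    · rintro ⟨δ, ⟨hδ1, hδ2⟩, ω, rfl⟩
      have ht : 0 < (1 - δ) / (1 + δ) := div_pos (by linarith) (by linarith)
      rw [norm_eq B hB _ ω ht]
      refine ⟨((1/((1-δ)/(1+δ)) : ℝ) : ℂ) + ((ω/((1-δ)/(1+δ)) : ℝ) : ℂ) * Complex.I, ?_, ?_⟩
      · rw [re_mk]
        positivity
      · congr 1
        rw [re_mk]
end

section
/- Let M ∈ ℂ^{2n×2n} be partitioned into n×n blocks M = [[M₁₁, M₁₂],[M₂₁, M₂₂]] and let γ > 0. Then the following are equivalent: (1) for every δ ∈ [−1,1] the matrix I_n − δM₁₁ is invertible and the largest singular value of M₂₂ + δ·M₂₁(I_n − δM₁₁)⁻¹M₁₂ is strictly less than γ; (2) for every real δ with |δ| ≤ 1 and every Δ_p ∈ ℂ^{n×n} with largest singular value at most 1, the matrix I_{2n} − M·diag(δ·I_n, γ⁻¹·Δ_p) is invertible (here diag(δ·I_n, γ⁻¹·Δ_p) is the block-diagonal 2n×2n matrix with blocks δ·I_n and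 γ⁻¹·Δ_p). -/
open Matrix

set_option synthInstance.maxHeartbeats 1000000
set_option maxHeartbeats 1600000

lemma specNorm_eq {n : Type*} [Fintype n] [DecidableEq n] (M : Matrix n n ℂ) :
    specNorm M = ‖Matrix.toEuclideanCLM (𝕜 := ℂ) M‖ := rfl

lemma specNorm_nonneg {n : Type*} [Fintype n] [DecidableEq n] (M : Matrix n n ℂ) :
    0 ≤ specNorm M := norm_nonneg _

lemma isUnit_one_sub_of_specNorm_lt_one {n : Type*} [Fintype n] [DecidableEq n]
    {X : Matrix n n ℂ} (h : specNorm X < 1) : IsUnit (1 - X) := by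
  have hu : IsUnit ((1 : EuclideanSpace ℂ n →L[ℂ] EuclideanSpace ℂ n) -
      Matrix.toEuclideanCLM (𝕜 := ℂ) X) :=
    (Units.oneSub _ (by rwa [← specNorm_eq])).isUnit
  have := hu.map (Matrix.toEuclideanCLM (𝕜 := ℂ) (n := n)).symm
  simpa using this

lemma specNorm_mul_le {n : Type*} [Fintype n] [DecidableEq n] (A B : Matrix n n ℂ) :
    specNorm (A * B) ≤ specNorm A * specNorm B := by
  simp only [specNorm_eq, _root_.map_mul]
  exact norm_mul_le _ _

lemma specNorm_smul_s2 (c : ℂ) {n : Type*} [Fintype n] [DecidableEq n] (A : Matrix n n ℂ) :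
    specNorm (c • A) = ‖c‖ * specNorm A := by
  simp only [specNorm_eq, _root_.map_smul]
  exact norm_smul c (Matrix.toEuclideanCLM (𝕜 := ℂ) A)

lemma specNorm_zero {n : Type*} [Fintype n] [DecidableEq n] :
    specNorm (0 : Matrix n n ℂ) = 0 := by
  simp only [specNorm_eq, map_zero, norm_zero]

lemma norm_attained {n : ℕ} [Nonempty (Fin n)]
    (T : EuclideanSpace ℂ (Fin n) →L[ℂ] EuclideanSpace ℂ (Fin n)) :
    ∃ x : EuclideanSpace ℂ (Fin n), ‖x‖ = 1 ∧ ‖T x‖ = ‖T‖ := by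
  obtain ⟨x₀, hx₀, hmax⟩ := (isCompact_sphere (0 : EuclideanSpace ℂ (Fin n)) 1).exists_isMaxOn
    ⟨EuclideanSpace.single (Classical.arbitrary (Fin n)) 1, by
      simp [mem_sphere_iff_norm, EuclideanSpace.norm_single]⟩
    (T.continuous.norm.continuousOn)
  have hx₀n : ‖x₀‖ = 1 := by simpa [mem_sphere_iff_norm] using hx₀
  refine ⟨x₀, hx₀n, le_antisymm (by simpa using T.le_opNorm x₀ |>.trans (by rw [hx₀n, mul_one])) ?_⟩
  refine T.opNorm_le_bound (norm_nonneg _) fun x => ?_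
  rcases eq_or_ne x 0 with rfl | hx
  · simp
  · have hxn : (0:ℝ) < ‖x‖ := norm_pos_iff.mpr hx
    have hmem : (‖x‖⁻¹ : ℂ) • x ∈ Metric.sphere (0 : EuclideanSpace ℂ (Fin n)) 1 := by
      simp [mem_sphere_iff_norm, norm_smul, inv_mul_cancel₀ hxn.ne']
    have := hmax hmem
    simp only [IsMaxOn, Set.mem_setOf_eq] at this
    have h2 : ‖T ((‖x‖⁻¹ : ℂ) • x)‖ ≤ ‖T x₀‖ := this
    rw [_root_.map_smul, norm_smul] at h2
    simp only [norm_inv, Complex.norm_real, Real.norm_eq_abs, abs_of_pos hxn] at h2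
    have hEq : ‖T x‖ = ‖x‖ * (‖x‖⁻¹ * ‖T x‖) := by field_simp
    rw [hEq, mul_comm (‖T x₀‖)]
    exact mul_le_mul_of_nonneg_left h2 hxn.le

lemma blockCompute {n : ℕ} (M₁₁ M₁₂ M₂₁ M₂₂ Δp : Matrix (Fin n) (Fin n) ℂ) (δ c : ℂ) :
    (1 : Matrix (Fin n ⊕ Fin n) (Fin n ⊕ Fin n) ℂ) -
        Matrix.fromBlocks M₁₁ M₁₂ M₂₁ M₂₂ * Matrix.fromBlocks (δ • 1) 0 0 (c • Δp)
      = Matrix.fromBlocks (1 - δ • M₁₁) (-(M₁₂ * (c • Δp))) (-(δ • M₂₁)) (1 - M₂₂ * (c • Δp)) := by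
  rw [Matrix.fromBlocks_multiply, sub_eq_add_neg, Matrix.fromBlocks_neg,
    ← Matrix.fromBlocks_one (m := Fin n), Matrix.fromBlocks_add]
  simp [Matrix.mul_smul, sub_eq_add_neg]

lemma key {n : ℕ} (M₁₁ M₁₂ M₂₁ M₂₂ Δp : Matrix (Fin n) (Fin n) ℂ) (δ c : ℂ)
    (hA : IsUnit ((1 : Matrix (Fin n) (Fin n) ℂ) - δ • M₁₁)) :
    IsUnit ((1 : Matrix (Fin n ⊕ Fin n) (Fin n ⊕ Fin n) ℂ) -
        Matrix.fromBlocks M₁₁ M₁₂ M₂₁ M₂₂ * Matrix.fromBlocks (δ • 1) 0 0 (c • Δp))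
    ↔ IsUnit ((1 : Matrix (Fin n) (Fin n) ℂ) -
        (M₂₂ + δ • (M₂₁ * ((1 : Matrix (Fin n) (Fin n) ℂ) - δ • M₁₁)⁻¹ * M₁₂)) * (c • Δp)) := by
  haveI := hA.invertible
  rw [blockCompute, Matrix.isUnit_iff_isUnit_det, Matrix.det_fromBlocks₁₁,
    Matrix.isUnit_iff_isUnit_det (A := (1 : Matrix (Fin n) (Fin n) ℂ) - _)]
  have hdA : IsUnit ((1 - δ • M₁₁).det) := Matrix.isUnit_iff_isUnit_det _ |>.mp hA
  have hS : (1 - M₂₂ * (c • Δp)) - (-(δ • M₂₁)) * ⅟(1 - δ • M₁₁) * (-(M₁₂ * (c • Δp)))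
      = 1 - (M₂₂ + δ • (M₂₁ * ((1 : Matrix (Fin n) (Fin n) ℂ) - δ • M₁₁)⁻¹ * M₁₂)) * (c • Δp) := by
    rw [Matrix.invOf_eq_nonsing_inv]
    simp only [Matrix.add_mul, Matrix.smul_mul, Matrix.mul_smul, Matrix.neg_mul, Matrix.mul_neg,
      neg_neg, Matrix.mul_assoc]
    module
  rw [hS]
  exact ⟨fun h => (IsUnit.mul_iff.mp h).2, fun h => hdA.mul h⟩

/-- Well-posedness with worst-case gain `< γ` of the LFT
`δ ↦ M₂₂ + δ M₂₁ (I - δ M₁₁)⁻¹ M₁₂` on `[-1,1]` is equivalent to robust invertibility of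
`I - M diag(δ I, γ⁻¹ Δp)` over all `|δ| ≤ 1` and contractive full blocks `Δp`. -/
theorem lft_wellposed_gain_iff_mu {n : ℕ}
    (M₁₁ M₁₂ M₂₁ M₂₂ : Matrix (Fin n) (Fin n) ℂ) (γ : ℝ) (hγ : 0 < γ) :
    (∀ δ ∈ Set.Icc (-1 : ℝ) 1,
      IsUnit ((1 : Matrix (Fin n) (Fin n) ℂ) - (δ : ℂ) • M₁₁) ∧
      specNorm (M₂₂ + (δ : ℂ) •
        (M₂₁ * ((1 : Matrix (Fin n) (Fin n) ℂ) - (δ : ℂ) • M₁₁)⁻¹ * M₁₂)) < γ)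
    ↔
    (∀ δ : ℝ, |δ| ≤ 1 → ∀ Δp : Matrix (Fin n) (Fin n) ℂ, specNorm Δp ≤ 1 →
      IsUnit ((1 : Matrix (Fin n ⊕ Fin n) (Fin n ⊕ Fin n) ℂ) -
        Matrix.fromBlocks M₁₁ M₁₂ M₂₁ M₂₂ *
          Matrix.fromBlocks ((δ : ℂ) • 1) 0 0 (((γ : ℂ))⁻¹ • Δp))) := by
  constructor
  · -- (1) → (2)
    intro h1 δ hδ Δp hΔp
    obtain ⟨hA, hG⟩ := h1 δ (Set.mem_Icc.mpr (abs_le.mp hδ))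
    rw [key _ _ _ _ _ _ _ hA]
    apply isUnit_one_sub_of_specNorm_lt_one
    set G := M₂₂ + (δ : ℂ) • (M₂₁ * ((1 : Matrix (Fin n) (Fin n) ℂ) - (δ : ℂ) • M₁₁)⁻¹ * M₁₂)
    have h1' : specNorm (G * (((γ : ℂ))⁻¹ • Δp)) ≤ specNorm G * (γ⁻¹ * specNorm Δp) := by
      have := specNorm_mul_le G (((γ : ℂ))⁻¹ • Δp)
      rwa [specNorm_smul_s2, norm_inv, Complex.norm_real, Real.norm_eq_abs,
        abs_of_pos hγ] at this
    have hγi : (0:ℝ) < γ⁻¹ := inv_pos.mpr hγ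
    have hGn : 0 ≤ specNorm G := specNorm_nonneg _
    have hΔn : 0 ≤ specNorm Δp := specNorm_nonneg _
    calc specNorm (G * (((γ : ℂ))⁻¹ • Δp)) ≤ specNorm G * (γ⁻¹ * specNorm Δp) := h1'
      _ ≤ specNorm G * γ⁻¹ := mul_le_mul_of_nonneg_left (by nlinarith) hGn
      _ < γ * γ⁻¹ := mul_lt_mul_of_pos_right hG hγi
      _ = 1 := mul_inv_cancel₀ hγ.ne'
  · -- (2) → (1)
    intro h2 δ hδIcc
    have hδ : |δ| ≤ 1 := abs_le.mpr ⟨hδIcc.1, hδIcc.2⟩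
    -- invertibility of I - δ M₁₁
    have hA : IsUnit ((1 : Matrix (Fin n) (Fin n) ℂ) - (δ : ℂ) • M₁₁) := by
      have h0 := h2 δ hδ 0 (by rw [specNorm_zero]; norm_num)
      rw [blockCompute, Matrix.isUnit_iff_isUnit_det] at h0
      simp only [smul_zero, Matrix.mul_zero, sub_zero, neg_zero] at h0
      rw [Matrix.det_fromBlocks_zero₁₂, Matrix.det_one, mul_one] at h0
      exact Matrix.isUnit_iff_isUnit_det _ |>.mpr h0
    refine ⟨hA, ?_⟩
    by_contra hge'
    push_neg at hge'
    set G := M₂₂ + (δ : ℂ) • (M₂₁ * ((1 : Matrix (Fin n) (Fin n) ℂ) - (δ : ℂ) • M₁₁)⁻¹ * M₁₂)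
      with hGdef
    set T := Matrix.toEuclideanCLM (𝕜 := ℂ) G with hTdef
    have hTnorm : ‖T‖ = specNorm G := (specNorm_eq G).symm
    have hσpos : 0 < specNorm G := lt_of_lt_of_le hγ hge'
    have hne : Nonempty (Fin n) := by
      by_contra h
      haveI : IsEmpty (Fin n) := not_nonempty_iff.mp h
      haveI : Subsingleton (EuclideanSpace ℂ (Fin n)) :=
        ⟨fun a b => by ext i; exact isEmptyElim i⟩
      have hT0 : T = 0 := ContinuousLinearMap.ext fun x => Subsingleton.elim _ _
      rw [← hTnorm, hT0, norm_zero] at hσpos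
      exact lt_irrefl _ hσpos
    obtain ⟨x, hx1, hxT⟩ := norm_attained T
    set σ : ℝ := specNorm G with hσdef
    have hσγ : γ ≤ σ := hge'
    have hTx : ‖T x‖ = σ := by rw [hxT, hTnorm]
    set v : EuclideanSpace ℂ (Fin n) := ((σ⁻¹ : ℝ) : ℂ) • T x with hvdef
    have hv1 : ‖v‖ = 1 := by
      rw [hvdef, norm_smul, Complex.norm_real, Real.norm_eq_abs, abs_of_pos (inv_pos.mpr hσpos),
        hTx, inv_mul_cancel₀ hσpos.ne']
    have hvne : v ≠ 0 := fun h => by simp [h] at hv1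
    set R : EuclideanSpace ℂ (Fin n) →L[ℂ] EuclideanSpace ℂ (Fin n) :=
      ((γ / σ : ℝ) : ℂ) • ((innerSL ℂ v).smulRight x) with hRdef
    set Δp : Matrix (Fin n) (Fin n) ℂ := (Matrix.toEuclideanCLM (𝕜 := ℂ)).symm R with hΔdef
    have hΔnorm : specNorm Δp ≤ 1 := by
      rw [specNorm_eq, hΔdef, StarAlgEquiv.apply_symm_apply, hRdef,
        norm_smul (((γ / σ : ℝ)) : ℂ) (((innerSL ℂ) v).smulRight x),
        ContinuousLinearMap.norm_smulRight_apply, innerSL_apply_norm, hv1, hx1, one_mul, mul_one,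
        Complex.norm_real, Real.norm_eq_abs, abs_of_pos (div_pos hγ hσpos)]
      exact div_le_one_of_le₀ hσγ hσpos.le
    have hunit := h2 δ hδ Δp hΔnorm
    rw [key _ _ _ _ _ _ _ hA] at hunit
    rw [← hGdef] at hunit
    -- transfer to CLM
    have hunit' : IsUnit ((1 : EuclideanSpace ℂ (Fin n) →L[ℂ] EuclideanSpace ℂ (Fin n)) -
        ((γ : ℂ))⁻¹ • (T * R)) := by
      have := hunit.map (Matrix.toEuclideanCLM (𝕜 := ℂ) (n := Fin n))
      simpa [map_sub, _root_.map_mul, _root_.map_smul, hΔdef, hTdef] using this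
    -- the kernel vector
    have hRv : R v = ((γ / σ : ℝ) : ℂ) • x := by
      rw [hRdef]
      simp only [ContinuousLinearMap.smul_apply, ContinuousLinearMap.smulRight_apply,
        innerSL_apply_apply]
      rw [inner_self_eq_norm_sq_to_K, hv1]
      norm_num
    have hscal : ((γ : ℂ))⁻¹ * ((γ / σ : ℝ) : ℂ) = ((σ⁻¹ : ℝ) : ℂ) := by
      have hγ0 : (γ:ℂ) ≠ 0 := Complex.ofReal_ne_zero.mpr hγ.ne'
      have hσ0 : (σ:ℂ) ≠ 0 := Complex.ofReal_ne_zero.mpr hσpos.ne'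
      push_cast
      field_simp
    have happly : ((1 : EuclideanSpace ℂ (Fin n) →L[ℂ] EuclideanSpace ℂ (Fin n)) -
        ((γ : ℂ))⁻¹ • (T * R)) v = 0 := by
      simp only [ContinuousLinearMap.sub_apply, ContinuousLinearMap.one_apply,
        ContinuousLinearMap.smul_apply, ContinuousLinearMap.mul_apply]
      rw [hRv, _root_.map_smul, smul_smul, hscal, ← hvdef, sub_self]
    obtain ⟨u, hu⟩ := hunit'
    have hv0 : v = 0 := by
      have huv : (↑u : EuclideanSpace ℂ (Fin n) →L[ℂ] EuclideanSpace ℂ (Fin n)) v = 0 := by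
        rw [hu]; exact happly
      have h4 : (((↑u⁻¹ : EuclideanSpace ℂ (Fin n) →L[ℂ] EuclideanSpace ℂ (Fin n)) *
          (↑u : EuclideanSpace ℂ (Fin n) →L[ℂ] EuclideanSpace ℂ (Fin n)))) v = 0 := by
        rw [ContinuousLinearMap.mul_apply, huv, map_zero]
      rwa [u.inv_mul, ContinuousLinearMap.one_apply] at h4
    exact hvne hv0
end

section
/- Let A ∈ ℝ^{n×n}. Then the function t ↦ ‖exp(tA)‖ has right derivative at t = 0 equal to the numerical abscissa: lim_{t→0⁺} (‖exp(tA)‖ − 1)/t = ω(A). -/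
open Matrix

/-- Largest (real) eigenvalue of a real (symmetric) matrix: the supremum of the real
roots of its characteristic polynomial. -/
noncomputable def maxEig {n : Type*} [Fintype n] [DecidableEq n] (S : Matrix n n ℝ) : ℝ :=
  sSup {μ : ℝ | S.charpoly.IsRoot μ}

/-- The numerical abscissa `ω(A) = ½ λ̄(A + Aᵀ)`. -/
noncomputable def numAbscissa {n : Type*} [Fintype n] [DecidableEq n]
    (A : Matrix n n ℝ) : ℝ :=
  maxEig (A + Aᵀ) / 2

section Aux

open NormedSpace Polynomial Finset
open scoped RealInnerProductSpace

lemma specNorm_eq_aux {n : ℕ} (M : Matrix (Fin n) (Fin n) ℝ) :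
    specNorm M = ‖toEuclideanCLM (𝕜 := ℝ) M‖ := by
  unfold specNorm
  congr 1

lemma toEuclideanCLM_exp_aux {n : ℕ} (B : Matrix (Fin n) (Fin n) ℝ) :
    toEuclideanCLM (𝕜 := ℝ) (exp B) = exp (toEuclideanCLM (𝕜 := ℝ) B) := by
  have hcont : Continuous (⇑(toEuclideanCLM (𝕜 := ℝ) (n := Fin n))) :=
    LinearMap.continuous_of_finiteDimensional
      ({ toFun := ⇑(toEuclideanCLM (𝕜 := ℝ)), map_add' := fun x y => map_add _ x y,
         map_smul' := fun c x => map_smul _ c x } :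
        Matrix (Fin n) (Fin n) ℝ →ₗ[ℝ]
          (EuclideanSpace ℝ (Fin n) →L[ℝ] EuclideanSpace ℝ (Fin n)))
  letI : SeminormedRing (Matrix (Fin n) (Fin n) ℝ) := Matrix.linftyOpSemiNormedRing
  letI : NormedRing (Matrix (Fin n) (Fin n) ℝ) := Matrix.linftyOpNormedRing
  letI : NormedAlgebra ℝ (Matrix (Fin n) (Fin n) ℝ) := Matrix.linftyOpNormedAlgebra
  letI : NormedAlgebra ℚ (Matrix (Fin n) (Fin n) ℝ) := Matrix.linftyOpNormedAlgebra
  exact map_exp (toEuclideanCLM (𝕜 := ℝ)) hcont B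

lemma isRoot_charpoly_iff_mem_spectrum_aux {n : ℕ} (S : Matrix (Fin n) (Fin n) ℝ) (μ : ℝ) :
    S.charpoly.IsRoot μ ↔ μ ∈ spectrum ℝ S := by
  rw [spectrum.mem_iff, Matrix.isUnit_iff_isUnit_det, isUnit_iff_ne_zero, not_ne_iff]
  have h1 : S.charpoly.eval μ = (algebraMap ℝ (Matrix (Fin n) (Fin n) ℝ) μ - S).det := by
    rw [Matrix.charpoly, eval_det, Matrix.matPolyEquiv_charmatrix]
    simp [Matrix.algebraMap_eq_diagonal]
    rfl
  constructor <;> intro h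
  · rwa [Polynomial.IsRoot, h1] at h
  · rwa [Polynomial.IsRoot, h1]

lemma exists_eigen_max_aux {n : ℕ} (hn : 1 ≤ n) {S : Matrix (Fin n) (Fin n) ℝ}
    (hS : S.IsHermitian) :
    (∃ i, hS.eigenvalues i = maxEig S) ∧ ∀ i, hS.eigenvalues i ≤ maxEig S := by
  have hne : Nonempty (Fin n) := Fin.pos_iff_nonempty.mp hn
  have hset : {μ : ℝ | S.charpoly.IsRoot μ} = Set.range hS.eigenvalues := by
    rw [← hS.spectrum_real_eq_range_eigenvalues]
    ext μ; exact isRoot_charpoly_iff_mem_spectrum_aux S μ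
  have hfin : (Set.range hS.eigenvalues).Finite := Set.finite_range _
  have hns : (Set.range hS.eigenvalues).Nonempty := Set.range_nonempty _
  constructor
  · have := hns.csSup_mem hfin
    rw [maxEig, hset]
    exact this.imp fun i hi => hi
  · intro i
    rw [maxEig, hset]
    exact le_csSup hfin.bddAbove (Set.mem_range_self i)

lemma toEuclideanLin_eigenvector_aux {n : ℕ} {S : Matrix (Fin n) (Fin n) ℝ} (hS : S.IsHermitian)
    (i : Fin n) :
    toEuclideanLin S (hS.eigenvectorBasis i) = hS.eigenvalues i • hS.eigenvectorBasis i := by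
  have h := hS.mulVec_eigenvectorBasis i
  rw [toEuclideanLin_apply]
  exact congrArg (WithLp.equiv 2 (Fin n → ℝ)).symm h

lemma inner_toEuclideanLin_le_aux {n : ℕ} {S : Matrix (Fin n) (Fin n) ℝ} (hS : S.IsHermitian)
    {c : ℝ} (hc : ∀ i, hS.eigenvalues i ≤ c) (x : EuclideanSpace ℝ (Fin n)) :
    ⟪x, toEuclideanLin S x⟫ ≤ c * ‖x‖ ^ 2 := by
  set b := hS.eigenvectorBasis with hb
  have hsym := (isHermitian_iff_isSymmetric.1 hS)
  calc ⟪x, toEuclideanLin S x⟫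
      = ∑ i, ⟪x, b i⟫ * ⟪b i, toEuclideanLin S x⟫ :=
        (b.sum_inner_mul_inner x (toEuclideanLin S x)).symm
    _ = ∑ i, hS.eigenvalues i * (⟪x, b i⟫ * ⟪b i, x⟫) := by
        apply Finset.sum_congr rfl
        intro i _
        rw [← hsym (b i) x, toEuclideanLin_eigenvector_aux hS i, real_inner_smul_left]
        ring
    _ ≤ ∑ i, c * (⟪x, b i⟫ * ⟪b i, x⟫) := by
        apply Finset.sum_le_sum
        intro i _
        have hnn : 0 ≤ ⟪x, b i⟫ * ⟪b i, x⟫ := by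
          rw [real_inner_comm x (b i)]
          exact mul_self_nonneg _
        exact mul_le_mul_of_nonneg_right (hc i) hnn
    _ = c * ⟪x, x⟫ := by rw [← Finset.mul_sum, b.sum_inner_mul_inner x x]
    _ = c * ‖x‖ ^ 2 := by rw [real_inner_self_eq_norm_sq]

end Aux

section Main

open NormedSpace Filter
open scoped RealInnerProductSpace Topology

set_option maxHeartbeats 1000000 in
/-- The right derivative of `t ↦ ‖exp(tA)‖` at `t = 0` is the numerical
abscissa: `lim_{t→0⁺} (‖exp(tA)‖ - 1)/t = ω(A)`. -/
theorem right_deriv_norm_exp_eq_numAbscissa {n : ℕ} (hn : 1 ≤ n)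
    (A : Matrix (Fin n) (Fin n) ℝ) :
    Filter.Tendsto (fun t : ℝ => (specNorm (NormedSpace.exp (t • A)) - 1) / t)
      (nhdsWithin 0 (Set.Ioi 0)) (nhds (numAbscissa A)) := by
  set T : EuclideanSpace ℝ (Fin n) →L[ℝ] EuclideanSpace ℝ (Fin n) :=
    toEuclideanCLM (𝕜 := ℝ) A with hT
  set S : Matrix (Fin n) (Fin n) ℝ := A + Aᵀ with hSdef
  have hS : S.IsHermitian := by
    rw [Matrix.IsHermitian, Matrix.conjTranspose_eq_transpose_of_trivial]
    rw [hSdef, Matrix.transpose_add, Matrix.transpose_transpose, add_comm]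
  set c : ℝ := maxEig S with hc
  obtain ⟨⟨i₀, hi₀⟩, hle⟩ := exists_eigen_max_aux hn hS
  -- rewrite specNorm as operator norm of exp of T
  have hspec : ∀ t : ℝ, specNorm (exp (t • A)) = ‖exp (t • T)‖ := by
    intro t
    rw [specNorm_eq_aux, toEuclideanCLM_exp_aux, _root_.map_smul]
  -- pointwise action and derivative of u t = exp (t•T) x
  have hTy : ∀ y : EuclideanSpace ℝ (Fin n), T y = toEuclideanLin A y := fun y =>
    DFunLike.congr_fun (coe_toEuclideanCLM_eq_toEuclideanLin A) y
  have hadj : (toEuclideanLin Aᵀ : EuclideanSpace ℝ (Fin n) →ₗ[ℝ] EuclideanSpace ℝ (Fin n)) = LinearMap.adjoint (toEuclideanLin A) := by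
    rw [← Matrix.conjTranspose_eq_transpose_of_trivial]
    try exact Matrix.toEuclideanLin_conjTranspose_eq_adjoint A
  have hpair : ∀ y : EuclideanSpace ℝ (Fin n),
      ⟪y, toEuclideanLin S y⟫ = ⟪y, T y⟫ + ⟪T y, y⟫ := by
    intro y
    rw [hSdef, map_add, LinearMap.add_apply, inner_add_right, hadj]
    rw [LinearMap.adjoint_inner_right]
    rw [hTy y, real_inner_comm (toEuclideanLin A y) y]
    try ring
  have hkey : ∀ y : EuclideanSpace ℝ (Fin n), ⟪y, T y⟫ + ⟪T y, y⟫ ≤ c * ‖y‖ ^ 2 := by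
    intro y
    rw [← hpair y]
    exact inner_toEuclideanLin_le_aux hS hle y
  -- derivative of u
  have hu : ∀ (x : EuclideanSpace ℝ (Fin n)) (t : ℝ),
      HasDerivAt (fun s : ℝ => exp (s • T) x) (T (exp (t • T) x)) t := by
    intro x t
    have h1 := hasDerivAt_exp_smul_const' (𝕂 := ℝ) T t
    have h2 := h1.clm_apply (hasDerivAt_const t x)
    simpa [ContinuousLinearMap.mul_apply] using h2
  have hinner : ∀ (x : EuclideanSpace ℝ (Fin n)) (t : ℝ),
      HasDerivAt (fun s : ℝ => ⟪exp (s • T) x, exp (s • T) x⟫)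
        (⟪exp (t • T) x, T (exp (t • T) x)⟫ + ⟪T (exp (t • T) x), exp (t • T) x⟫) t :=
    fun x t => (hu x t).inner ℝ (hu x t)
  have hu0 : ∀ x : EuclideanSpace ℝ (Fin n), exp ((0 : ℝ) • T) x = x := by
    intro x
    have h0 : (0 : ℝ) • T = 0 := zero_smul ℝ T
    rw [h0, exp_zero, ContinuousLinearMap.one_apply]
  -- upper bound : ‖exp (t•T) x‖² ≤ exp(c t) ‖x‖² for t ≥ 0
  have hupper : ∀ (x : EuclideanSpace ℝ (Fin n)) (t : ℝ), 0 ≤ t →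
      ⟪exp (t • T) x, exp (t • T) x⟫ ≤ Real.exp (c * t) * ⟪x, x⟫ := by
    intro x t ht
    set g : ℝ → ℝ := fun s => Real.exp (-(c * s)) * ⟪exp (s • T) x, exp (s • T) x⟫ with hg
    have hgd : ∀ s : ℝ, HasDerivAt g
        (Real.exp (-(c * s)) * -(c * 1) * ⟪exp (s • T) x, exp (s • T) x⟫ +
          Real.exp (-(c * s)) *
          (⟪exp (s • T) x, T (exp (s • T) x)⟫ + ⟪T (exp (s • T) x), exp (s • T) x⟫)) s := by
      intro s
      have hlin : HasDerivAt (fun s : ℝ => -(c * s)) (-(c * 1)) s :=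
        ((hasDerivAt_id s).const_mul c).neg
      have hexp := (Real.hasDerivAt_exp (-(c * s))).comp s hlin
      exact hexp.mul (hinner x s)
    have hgmono : Antitone g := by
      apply antitone_of_deriv_nonpos
      · exact fun s => (hgd s).differentiableAt
      · intro s
        rw [(hgd s).deriv, real_inner_self_eq_norm_sq]
        have hb := hkey (exp (s • T) x)
        have hep : (0 : ℝ) < Real.exp (-(c * s)) := Real.exp_pos _
        have h2 : Real.exp (-(c * s)) *
            (⟪exp (s • T) x, T (exp (s • T) x)⟫ + ⟪T (exp (s • T) x), exp (s • T) x⟫) ≤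
            Real.exp (-(c * s)) * (c * ‖exp (s • T) x‖ ^ 2) :=
          mul_le_mul_of_nonneg_left hb hep.le
        nlinarith [h2]
    have h0 := hgmono ht
    rw [hg] at h0
    simp only [mul_zero, neg_zero, Real.exp_zero, one_mul, hu0 x] at h0
    have := mul_le_mul_of_nonneg_left h0 (le_of_lt (Real.exp_pos (c * t)))
    rw [← mul_assoc, ← Real.exp_add] at this
    simpa using this
  -- operator norm bound
  have hopnorm : ∀ t : ℝ, 0 ≤ t → ‖exp (t • T)‖ ≤ Real.exp (c * t / 2) := by
    intro t ht
    apply ContinuousLinearMap.opNorm_le_bound _ (le_of_lt (Real.exp_pos _))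
    intro x
    have h2 := hupper x t ht
    rw [real_inner_self_eq_norm_sq, real_inner_self_eq_norm_sq] at h2
    have h3 : ‖exp (t • T) x‖ ^ 2 ≤ (Real.exp (c * t / 2) * ‖x‖) ^ 2 := by
      have hexp2 : Real.exp (c * t / 2) ^ 2 = Real.exp (c * t) := by
        rw [sq, ← Real.exp_add]
        ring_nf
      rw [mul_pow, hexp2]
      exact h2
    calc ‖exp (t • T) x‖ = Real.sqrt (‖exp (t • T) x‖ ^ 2) :=
          (Real.sqrt_sq (norm_nonneg _)).symm
      _ ≤ Real.sqrt ((Real.exp (c * t / 2) * ‖x‖) ^ 2) := Real.sqrt_le_sqrt h3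
      _ = Real.exp (c * t / 2) * ‖x‖ := Real.sqrt_sq
          (mul_nonneg (le_of_lt (Real.exp_pos _)) (norm_nonneg _))
  -- lower bound via eigenvector
  obtain ⟨x₀, hx₀norm, hx₀eig⟩ : ∃ x₀ : EuclideanSpace ℝ (Fin n),
      ‖x₀‖ = 1 ∧ toEuclideanLin S x₀ = c • x₀ := by
    refine ⟨hS.eigenvectorBasis i₀, hS.eigenvectorBasis.orthonormal.1 i₀, ?_⟩
    rw [toEuclideanLin_eigenvector_aux hS i₀, hi₀]
  set f₀ : ℝ → ℝ := fun s => ⟪exp (s • T) x₀, exp (s • T) x₀⟫ with hf₀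
  have hf₀0 : f₀ 0 = 1 := by
    rw [hf₀]
    simp only [hu0 x₀]
    rw [real_inner_self_eq_norm_sq, hx₀norm, one_pow]
  have hf₀d : HasDerivAt f₀ c 0 := by
    have := hinner x₀ 0
    simp only [hu0 x₀] at this
    have hval : ⟪x₀, T x₀⟫ + ⟪T x₀, x₀⟫ = c := by
      rw [← hpair x₀, hx₀eig, real_inner_smul_right, real_inner_self_eq_norm_sq, hx₀norm]
      ring
    rwa [hval] at this
  have hφd : HasDerivAt (fun s => Real.sqrt (f₀ s)) (c / 2) 0 := by
    have h := hf₀d.sqrt (by rw [hf₀0]; norm_num)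
    rw [hf₀0] at h
    simpa using h
  have hφle : ∀ t : ℝ, Real.sqrt (f₀ t) ≤ ‖exp (t • T)‖ := by
    intro t
    have h1 : Real.sqrt (f₀ t) = ‖exp (t • T) x₀‖ := by
      have h2 : f₀ t = ‖exp (t • T) x₀‖ ^ 2 := real_inner_self_eq_norm_sq _
      rw [h2, Real.sqrt_sq (norm_nonneg _)]
    rw [h1]
    calc ‖exp (t • T) x₀‖ ≤ ‖exp (t • T)‖ * ‖x₀‖ := (exp (t • T)).le_opNorm x₀
      _ = ‖exp (t • T)‖ := by rw [hx₀norm, mul_one]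
  -- limits of the two bounding slopes
  have hlow : Tendsto (fun t : ℝ => (Real.sqrt (f₀ t) - 1) / t) (𝓝[>] 0) (𝓝 (c / 2)) := by
    have h := hasDerivAt_iff_tendsto_slope.1 hφd
    have h2 := h.mono_left (nhdsWithin_mono 0 (fun t ht => ne_of_gt ht : Set.Ioi 0 ⊆ {(0 : ℝ)}ᶜ))
    apply h2.congr
    intro t
    simp only [slope_def_field, hf₀0, Real.sqrt_one, sub_zero]
  have hup : Tendsto (fun t : ℝ => (Real.exp (c * t / 2) - 1) / t) (𝓝[>] 0) (𝓝 (c / 2)) := by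
    have hlin : HasDerivAt (fun t : ℝ => c * t / 2) (c / 2) 0 := by
      simpa using ((hasDerivAt_id (0 : ℝ)).const_mul c).div_const 2
    have hexpd : HasDerivAt (fun t : ℝ => Real.exp (c * t / 2)) (c / 2) 0 := by
      have h := (Real.hasDerivAt_exp ((c : ℝ) * 0 / 2)).comp 0 hlin
      simpa [Function.comp_def] using h
    have h := hasDerivAt_iff_tendsto_slope.1 hexpd
    have h2 := h.mono_left (nhdsWithin_mono 0 (fun t ht => ne_of_gt ht : Set.Ioi 0 ⊆ {(0 : ℝ)}ᶜ))
    apply h2.congr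
    intro t
    simp only [slope_def_field, mul_zero, zero_div, Real.exp_zero, sub_zero]
  have hmid : Tendsto (fun t : ℝ => (‖exp (t • T)‖ - 1) / t) (𝓝[>] 0) (𝓝 (c / 2)) := by
    apply tendsto_of_tendsto_of_tendsto_of_le_of_le' hlow hup
    · filter_upwards [self_mem_nhdsWithin] with t ht
      have htpos : (0 : ℝ) < t := ht
      exact (div_le_div_iff_of_pos_right htpos).2 (by linarith [hφle t])
    · filter_upwards [self_mem_nhdsWithin] with t ht
      have htpos : (0 : ℝ) < t := ht
      exact (div_le_div_iff_of_pos_right htpos).2 (by linarith [hopnorm t htpos.le])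
  have hω : numAbscissa A = c / 2 := rfl
  rw [hω]
  exact hmid.congr fun t => by rw [hspec t]

end Main
end

section
/- Let A ∈ ℝ^{n×n}, n ≥ 1, be stable. Then K(A) = sup_{ε > 0} α_ε(A)/ε, where α_ε(A) is the ε-pseudospectral abscissa of A. -/
open Matrix

/-- The `ε`-pseudospectral abscissa: the supremum of real parts of points `z ∈ ℂ` which
are eigenvalues of `A` or where the resolvent norm is at least `1/ε`. -/
noncomputable def pseudoAbscissa {n : Type*} [Fintype n] [DecidableEq n]
    (ε : ℝ) (A : Matrix n n ℝ) : ℝ :=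
  sSup {r : ℝ | ∃ z : ℂ,
    (((A.map (algebraMap ℝ ℂ)).charpoly).IsRoot z ∨
      1 / ε ≤ specNorm ((z • (1 : Matrix n n ℂ) - A.map (algebraMap ℝ ℂ))⁻¹)) ∧
    r = z.re}

section auxKreiss

open Polynomial Filter

lemma kreissAux_ringEquiv_ring_inverse {R S : Type*} [Ring R] [Ring S] (e : R ≃+* S) (x : R) :
    Ring.inverse (e x) = e (Ring.inverse x) := by
  by_cases h : IsUnit x
  · obtain ⟨u, rfl⟩ := h
    have h1 : e ↑u = ↑(Units.map (e : R →* S) u) := rfl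
    rw [h1, Ring.inverse_unit, Ring.inverse_unit, ← map_inv]
    rfl
  · rw [Ring.inverse_non_unit _ h, Ring.inverse_non_unit, map_zero]
    intro hu
    exact h (by simpa using hu.map e.symm)

variable {n : Type*} [Fintype n] [DecidableEq n]

lemma kreissAux_specNorm_eq (M : Matrix n n ℂ) :
    specNorm M = ‖Matrix.toEuclideanCLM (𝕜 := ℂ) M‖ := by
  rw [specNorm]; rfl

lemma kreissAux_toEuclideanCLM_inv (M : Matrix n n ℂ) :
    Matrix.toEuclideanCLM (𝕜 := ℂ) M⁻¹ = Ring.inverse (Matrix.toEuclideanCLM (𝕜 := ℂ) M) := by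
  rw [Matrix.nonsing_inv_eq_ringInverse]
  exact (kreissAux_ringEquiv_ring_inverse (Matrix.toEuclideanCLM (𝕜 := ℂ)).toRingEquiv M).symm

lemma kreissAux_eval_charpoly_det (M : Matrix n n ℂ) (z : ℂ) :
    M.charpoly.eval z = (z • (1 : Matrix n n ℂ) - M).det := by
  rw [Matrix.charpoly, _root_.eval_det, Matrix.matPolyEquiv_charmatrix]
  simp [Algebra.algebraMap_eq_smul_one, Matrix.scalar]

lemma kreissAux_isRoot_iff_not_isUnit (M : Matrix n n ℂ) (z : ℂ) :
    M.charpoly.IsRoot z ↔ ¬ IsUnit (z • (1 : Matrix n n ℂ) - M) := by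
  rw [Matrix.isUnit_iff_isUnit_det, isUnit_iff_ne_zero, not_not, ← kreissAux_eval_charpoly_det]
  exact Iff.rfl

lemma kreissAux_mem_spectrum_iff_isRoot (M : Matrix n n ℂ) (z : ℂ) :
    z ∈ spectrum ℂ (Matrix.toEuclideanCLM (𝕜 := ℂ) M) ↔ M.charpoly.IsRoot z := by
  rw [AlgEquiv.spectrum_eq (Matrix.toEuclideanCLM (𝕜 := ℂ)) M, spectrum.mem_iff,
    kreissAux_isRoot_iff_not_isUnit, Algebra.algebraMap_eq_smul_one]

lemma kreissAux_specNorm_resolvent (M : Matrix n n ℂ) (z : ℂ) :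
    specNorm ((z • (1 : Matrix n n ℂ) - M)⁻¹)
      = ‖resolvent (Matrix.toEuclideanCLM (𝕜 := ℂ) M) z‖ := by
  rw [kreissAux_specNorm_eq, kreissAux_toEuclideanCLM_inv, resolvent]
  congr 2
  rw [map_sub, _root_.map_smul, _root_.map_one, Algebra.algebraMap_eq_smul_one]

lemma kreissAux_bound {A : Type*} [NormedRing A] [NormedAlgebra ℂ A] [CompleteSpace A]
    [NormOneClass A] (a : A) (h : ∀ z : ℂ, 0 ≤ z.re → z ∈ resolventSet ℂ a) :
    ∃ C : ℝ, 1 ≤ C ∧ ∀ s : ℂ, 0 ≤ s.re → s.re * ‖resolvent a s‖ ≤ C := by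
  have h1 : ∀ᶠ (x : A) in nhds 0, ‖x‖ ≤ 1 := by
    filter_upwards [Metric.ball_mem_nhds (0 : A) one_pos] with x hx
    simpa [dist_zero_right] using (Metric.mem_ball.mp hx).le
  have h2 := (spectrum.resolvent_tendsto_cobounded (𝕜 := ℂ) a).eventually h1
  rw [Filter.atTop_basis_Ioi.cobounded_of_norm.eventually_iff] at h2
  obtain ⟨R, -, hR⟩ := h2
  set R' : ℝ := max R 0 + 1 with hR'def
  have hR'0 : 0 < R' := by positivity
  set K : Set ℂ := Metric.closedBall 0 R' ∩ {z : ℂ | 0 ≤ z.re} with hK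
  have hKc : IsCompact K :=
    (isCompact_closedBall 0 R').inter_right (isClosed_le continuous_const Complex.continuous_re)
  have hcont : ContinuousOn (resolvent a) K := fun z hz =>
    ((spectrum.hasDerivAt_resolvent (h z hz.2)).continuousAt).continuousWithinAt
  obtain ⟨C2, hC2⟩ := hKc.exists_bound_of_continuousOn hcont
  refine ⟨max 1 (max (1 + ‖a‖) (R' * C2)), le_max_left _ _, fun s hs => ?_⟩
  have hre_abs : s.re ≤ ‖s‖ :=
    le_trans (Complex.re_le_norm s) le_rfl
  by_cases hcase : ‖s‖ ≤ R'
  · have hsK : s ∈ K := ⟨Metric.mem_closedBall.mpr (by simpa [dist_zero_right] using hcase), hs⟩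
    have h3 : s.re ≤ R' := le_trans hre_abs hcase
    have : s.re * ‖resolvent a s‖ ≤ R' * C2 :=
      mul_le_mul h3 (hC2 s hsK) (norm_nonneg _) hR'0.le
    exact le_trans this (le_trans (le_max_right _ _) (le_max_right _ _))
  · push_neg at hcase
    have hRs : R < ‖s‖ := lt_of_le_of_lt (by simp [hR'def]; linarith [le_max_left R 0]) hcase
    have hres1 : ‖resolvent a s‖ ≤ 1 := hR (Set.mem_preimage.mpr (Set.mem_Ioi.mpr hRs))
    have hunit : IsUnit (algebraMap ℂ A s - a) := h s hs
    have hid : s • resolvent a s = 1 + a * resolvent a s := by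
      have hmul : (algebraMap ℂ A s - a) * resolvent a s = 1 :=
        Ring.mul_inverse_cancel _ hunit
      have h4 : algebraMap ℂ A s * resolvent a s = 1 + a * resolvent a s := by
        rw [← hmul]; noncomm_ring
      rw [Algebra.algebraMap_eq_smul_one, smul_mul_assoc, one_mul] at h4
      exact h4
    have : s.re * ‖resolvent a s‖ ≤ 1 + ‖a‖ := by
      calc s.re * ‖resolvent a s‖ ≤ ‖s‖ * ‖resolvent a s‖ :=
            mul_le_mul_of_nonneg_right hre_abs (norm_nonneg _)
        _ = ‖s • resolvent a s‖ := (norm_smul s _).symm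
        _ = ‖1 + a * resolvent a s‖ := by rw [hid]
        _ ≤ ‖(1 : A)‖ + ‖a‖ * ‖resolvent a s‖ :=
            le_trans (norm_add_le _ _) (by gcongr; exact norm_mul_le _ _)
        _ ≤ 1 + ‖a‖ := by
            rw [norm_one]
            nlinarith [norm_nonneg a]
    exact le_trans this (le_trans (le_max_left _ _) (le_max_right _ _))

end auxKreiss

/-- `K(A) = sup_{ε > 0} α_ε(A)/ε`. -/
theorem kreiss_eq_sup_pseudoAbscissa_div {n : ℕ} (hn : 1 ≤ n)
    (A : Matrix (Fin n) (Fin n) ℝ) (hA : IsStable A) :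
    Kreiss A = sSup {r : ℝ | ∃ ε : ℝ, 0 < ε ∧ r = pseudoAbscissa ε A / ε} := by
  haveI : Nonempty (Fin n) := ⟨⟨0, hn⟩⟩
  set M : Matrix (Fin n) (Fin n) ℂ := A.map (algebraMap ℝ ℂ) with hMdef
  set a := Matrix.toEuclideanCLM (𝕜 := ℂ) M with hadef
  -- notation for the two sets
  set S1 : Set ℝ := {r : ℝ | ∃ s : ℂ, 0 < s.re ∧
    r = s.re * specNorm ((s • (1 : Matrix (Fin n) (Fin n) ℂ) - M)⁻¹)} with hS1def
  set S2 : Set ℝ := {r : ℝ | ∃ ε : ℝ, 0 < ε ∧ r = pseudoAbscissa ε A / ε} with hS2def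
  set P : ℝ → Set ℝ := fun ε => {r : ℝ | ∃ z : ℂ,
    (M.charpoly.IsRoot z ∨
      1 / ε ≤ specNorm ((z • (1 : Matrix (Fin n) (Fin n) ℂ) - M)⁻¹)) ∧ r = z.re} with hPdef
  have hKreiss : Kreiss A = sSup S1 := rfl
  have hPα : ∀ ε : ℝ, pseudoAbscissa ε A = sSup (P ε) := fun _ => rfl
  have hresnorm : ∀ z : ℂ,
      specNorm ((z • (1 : Matrix (Fin n) (Fin n) ℂ) - M)⁻¹) = ‖resolvent a z‖ :=
    fun z => kreissAux_specNorm_resolvent M z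
  -- the closed right half plane is in the resolvent set
  have hrhp : ∀ z : ℂ, 0 ≤ z.re → z ∈ resolventSet ℂ a := by
    intro z hz
    have hns : z ∉ spectrum ℂ a := by
      intro hz'
      exact absurd hz (not_le.mpr (hA z ((kreissAux_mem_spectrum_iff_isRoot M z).mp hz')))
    rw [spectrum, Set.mem_compl_iff, not_not] at hns
    exact hns
  have hunit : ∀ z : ℂ, 0 ≤ z.re →
      IsUnit (algebraMap ℂ (EuclideanSpace ℂ (Fin n) →L[ℂ] EuclideanSpace ℂ (Fin n)) z - a) :=
    fun z hz => spectrum.mem_resolventSet_iff.mp (hrhp z hz)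
  -- positivity of resolvent norm on the open right half plane
  have hrespos : ∀ z : ℂ, 0 < z.re → 0 < ‖resolvent a z‖ := by
    intro z hz
    have hmul : (algebraMap ℂ _ z - a) * resolvent a z = 1 :=
      Ring.mul_inverse_cancel _ (hunit z hz.le)
    have hne : resolvent a z ≠ 0 := by
      intro h0
      rw [h0, mul_zero] at hmul
      obtain ⟨x, hx⟩ := exists_ne (0 : EuclideanSpace ℂ (Fin n))
      apply hx
      calc x = (1 : EuclideanSpace ℂ (Fin n) →L[ℂ] EuclideanSpace ℂ (Fin n)) x := rfl
        _ = (0 : EuclideanSpace ℂ (Fin n) →L[ℂ] EuclideanSpace ℂ (Fin n)) x := by rw [← hmul]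
        _ = 0 := rfl
    exact norm_pos_iff.mpr hne
  -- the uniform bound
  obtain ⟨C, hC1, hC⟩ := kreissAux_bound a hrhp
  have hS1bdd : BddAbove S1 := by
    refine ⟨C, fun r hr => ?_⟩
    obtain ⟨s, hs, rfl⟩ := hr
    rw [hresnorm]
    exact hC s hs.le
  -- existence of an eigenvalue
  obtain ⟨z0, hz0⟩ : ∃ z : ℂ, M.charpoly.IsRoot z := by
    have hdeg : M.charpoly.natDegree = n := by
      rw [Matrix.charpoly_natDegree_eq_dim, Fintype.card_fin]
    apply Complex.exists_root
    rw [Polynomial.degree_eq_natDegree (Matrix.charpoly_monic M).ne_zero, hdeg]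
    exact_mod_cast hn
  have hPne : ∀ ε : ℝ, (P ε).Nonempty := fun ε => ⟨z0.re, z0, Or.inl hz0, rfl⟩
  -- upper bounds for P ε
  have hub : ∀ ε : ℝ, 0 < ε → ∀ r ∈ P ε, r ≤ max 0 (C * ε) := by
    intro ε hε r hr
    obtain ⟨z, hcond, rfl⟩ := hr
    rcases hcond with hroot | hnorm
    · exact le_trans (hA z hroot).le (le_max_left _ _)
    · rcases le_or_gt z.re 0 with hzre | hzre
      · exact le_trans hzre (le_max_left _ _)
      · rw [hresnorm] at hnorm
        have h5 : z.re * (1 / ε) ≤ z.re * ‖resolvent a z‖ :=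
          mul_le_mul_of_nonneg_left hnorm hzre.le
        have h6 : z.re * ‖resolvent a z‖ ≤ C := hC z hzre.le
        have h7 : z.re / ε ≤ C := by rw [div_eq_mul_one_div]; linarith
        have h8 : z.re ≤ C * ε := (div_le_iff₀ hε).mp h7
        exact le_trans h8 (le_max_right _ _)
  have hPbdd : ∀ ε : ℝ, 0 < ε → BddAbove (P ε) := fun ε hε => ⟨max 0 (C * ε), hub ε hε⟩
  have hαbound : ∀ ε : ℝ, 0 < ε → pseudoAbscissa ε A ≤ C * ε := by
    intro ε hε
    rw [hPα]
    have := Real.sSup_le (hub ε hε) (le_max_left 0 (C * ε))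
    rwa [max_eq_right (by positivity : (0:ℝ) ≤ C * ε)] at this
  have hS2bdd : BddAbove S2 := by
    refine ⟨C, fun r hr => ?_⟩
    obtain ⟨ε, hε, rfl⟩ := hr
    rw [div_le_iff₀ hε]
    exact hαbound ε hε
  -- Kreiss constant is nonnegative
  have h1S1 : (1:ℝ) * specNorm (((1:ℂ) • (1 : Matrix (Fin n) (Fin n) ℂ) - M)⁻¹) ∈ S1 :=
    ⟨1, by simp, by simp⟩
  have hK0 : 0 ≤ Kreiss A := by
    rw [hKreiss]
    refine le_trans ?_ (le_csSup hS1bdd h1S1)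
    rw [one_mul, hresnorm]
    exact norm_nonneg _
  -- sSup S2 is nonnegative
  have hres1pos : 0 < ‖resolvent a (1 : ℂ)‖ := hrespos (1 : ℂ) (by norm_num)
  have hS2nonneg : 0 ≤ sSup S2 := by
    set ε₀ : ℝ := ‖resolvent a (1 : ℂ)‖⁻¹ with hε₀def
    have hε₀ : 0 < ε₀ := by positivity
    have h1P : (1:ℝ) ∈ P ε₀ := by
      refine ⟨1, Or.inr ?_, by simp⟩
      rw [hresnorm, hε₀def, one_div, inv_inv]
    have hα1 : (1:ℝ) ≤ pseudoAbscissa ε₀ A := by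
      rw [hPα]; exact le_csSup (hPbdd ε₀ hε₀) h1P
    have hr₀ : (0:ℝ) ≤ pseudoAbscissa ε₀ A / ε₀ := div_nonneg (by linarith) hε₀.le
    exact le_trans hr₀ (le_csSup hS2bdd ⟨ε₀, hε₀, rfl⟩)
  rw [hKreiss]
  apply le_antisymm
  · -- sSup S1 ≤ sSup S2
    apply Real.sSup_le _ hS2nonneg
    intro r hr
    obtain ⟨s, hs, rfl⟩ := hr
    have hv : 0 < ‖resolvent a s‖ := hrespos s hs
    set ε : ℝ := ‖resolvent a s‖⁻¹ with hεdef
    have hε : 0 < ε := by positivity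
    have hsP : s.re ∈ P ε := by
      refine ⟨s, Or.inr ?_, rfl⟩
      rw [hresnorm, hεdef, one_div, inv_inv]
    have hle : s.re ≤ pseudoAbscissa ε A := by
      rw [hPα]; exact le_csSup (hPbdd ε hε) hsP
    have hval : s.re * specNorm ((s • (1 : Matrix (Fin n) (Fin n) ℂ) - M)⁻¹) = s.re / ε := by
      rw [hresnorm, hεdef]; field_simp
    rw [hval]
    refine le_trans ((div_le_div_iff_of_pos_right hε).mpr hle) ?_
    exact le_csSup hS2bdd ⟨ε, hε, rfl⟩
  · -- sSup S2 ≤ sSup S1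
    apply Real.sSup_le _ hK0
    intro r hr
    obtain ⟨ε, hε, rfl⟩ := hr
    rw [div_le_iff₀ hε]
    have : pseudoAbscissa ε A ≤ Kreiss A * ε := by
      rw [hPα]
      apply Real.sSup_le _ (mul_nonneg hK0 hε.le)
      intro r' hr'
      obtain ⟨z, hcond, rfl⟩ := hr'
      rcases hcond with hroot | hnorm
      · exact le_trans (hA z hroot).le (mul_nonneg hK0 hε.le)
      · rcases le_or_gt z.re 0 with hzre | hzre
        · exact le_trans hzre (mul_nonneg hK0 hε.le)
        · have helem : z.re * specNorm ((z • (1 : Matrix (Fin n) (Fin n) ℂ) - M)⁻¹) ∈ S1 :=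
            ⟨z, hzre, rfl⟩
          have hK : z.re * specNorm ((z • (1 : Matrix (Fin n) (Fin n) ℂ) - M)⁻¹) ≤ Kreiss A := by
            rw [hKreiss]; exact le_csSup hS1bdd helem
          have h5 : z.re * (1 / ε) ≤ z.re * specNorm ((z • (1 : Matrix (Fin n) (Fin n) ℂ) - M)⁻¹) :=
            mul_le_mul_of_nonneg_left hnorm hzre.le
          have h7 : z.re / ε ≤ Kreiss A := by rw [div_eq_mul_one_div]; linarith
          exact (div_le_iff₀ hε).mp h7
    exact this
end
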